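/- Let α, β be the two roots of X² − aX + c = 0 in a field of characteristic 0 with α ≠ β. Consider the 2×2 matrix U = [[a, 1], [−c, 0]]. Then its eigenvalues are α and β, the vectors (1, −β) and (1, −α) are respective eigenvectors, and if |α|_p = 1 > |β|_p (for a p-adic absolute value on the field), then U^{m!} converges as m → ∞ to the projection onto the α-eigenline along the β-eigenline, scaled by the limit of α^{m!}. -/

import Mathlib

open Filter

section padicLemmas

variable {p : ℕ} [hp : Fact p.Prime]

lemma padic_norm_natCast_le_of_dvd {k n : ℕ} (h : p ^ k ∣ n) :
    ‖(n : ℚ_[p])‖ ≤ (p : ℝ) ^ (-(k : ℤ)) := by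
  have hcast : ((n : ℤ) : ℚ_[p]) = (n : ℚ_[p]) := by push_cast; ring
  rw [← hcast]
  exact (Padic.norm_int_le_pow_iff_dvd _ _).2 (by exact_mod_cast h)

lemma padic_norm_natCast_lb (n : ℕ) (hn : n ≠ 0) :
    ((p : ℝ) * n)⁻¹ ≤ ‖(n : ℚ_[p])‖ := by
  have hp1 : (1 : ℝ) < p := by exact_mod_cast hp.out.one_lt
  set v := n.factorization p with hv
  have hnd : ¬ ((p : ℤ) ^ (v + 1) ∣ (n : ℤ)) := by
    intro h
    exact Nat.pow_succ_factorization_not_dvd hn hp.out (by exact_mod_cast h)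
  have hcast : ((n : ℤ) : ℚ_[p]) = (n : ℚ_[p]) := by push_cast; ring
  have h2 : ¬ (‖(n : ℚ_[p])‖ ≤ (p : ℝ) ^ (-((v+1 : ℕ) : ℤ))) := by
    rw [← hcast]
    intro h
    exact hnd (by exact_mod_cast (Padic.norm_int_le_pow_iff_dvd (n : ℤ) (v+1)).1 h)
  push_neg at h2
  refine le_trans ?_ h2.le
  rw [zpow_neg, zpow_natCast]
  have hle : (p : ℕ) ^ v ≤ n := Nat.ordProj_le p hn
  have hle' : ((p : ℝ)) ^ v ≤ (n : ℝ) := by exact_mod_cast hle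
  refine inv_anti₀ (by positivity) ?_
  calc (p : ℝ) ^ (v + 1) = (p : ℝ) * (p : ℝ) ^ v := by ring
    _ ≤ (p : ℝ) * n := by nlinarith

lemma binom_bound {K : Type*} [NormedField K]
    [Algebra ℚ_[p] K] (hext : ∀ y : ℚ_[p], ‖algebraMap ℚ_[p] K y‖ = ‖y‖)
    {x : K} (hx : ‖x‖ < 1) :
    ∃ C : ℝ, 0 ≤ C ∧ ∀ M : ℕ, ‖(1 + x) ^ M - 1‖ ≤ C * ‖(M : ℚ_[p])‖ := by
  have hKnat : ∀ n : ℕ, ‖(n : K)‖ = ‖(n : ℚ_[p])‖ := fun n => by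
    rw [← map_natCast (algebraMap ℚ_[p] K), hext]
  have hnat1 : ∀ n : ℕ, ‖(n : ℚ_[p])‖ ≤ 1 := fun n => by
    simpa using Padic.norm_int_le_one (p := p) (n : ℤ)
  haveI : IsUltrametricDist K :=
    IsUltrametricDist.isUltrametricDist_of_forall_norm_natCast_le_one (fun n => by
      rw [hKnat]; exact hnat1 n)
  have hxnorm : ‖(‖x‖ : ℝ)‖ < 1 := by
    rwa [Real.norm_eq_abs, abs_of_nonneg (norm_nonneg x)]
  have htend : Tendsto (fun i : ℕ => (i : ℝ) ^ 1 * ‖x‖ ^ i) atTop (nhds 0) :=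
    (summable_pow_mul_geometric_of_norm_lt_one 1 hxnorm).tendsto_atTop_zero
  obtain ⟨B, hB⟩ := htend.bddAbove_range
  set C : ℝ := max ((p : ℝ) * B) 0 with hCdef
  have hC0 : (0:ℝ) ≤ C := le_max_right _ _
  refine ⟨C, hC0, fun M => ?_⟩
  obtain _ | m := M
  · simp
  set M := m + 1 with hM
  have expand : (1 + x) ^ M - 1
      = ∑ i ∈ Finset.range M, x ^ (i+1) * (M.choose (i+1) : K) := by
    rw [add_comm (1:K) x, add_pow, Finset.sum_range_succ']
    simp only [pow_zero, one_pow, one_mul, mul_one, Nat.choose_zero_right, Nat.cast_one]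
    rw [add_sub_cancel_right]
  rw [expand]
  refine IsUltrametricDist.norm_sum_le_of_forall_le_of_nonneg (by positivity) ?_
  intro i hi
  rw [norm_mul, norm_pow, hKnat]
  have key : ‖((M : ℕ) : ℚ_[p])‖ * ‖((m.choose i : ℕ) : ℚ_[p])‖
      = ‖((M.choose (i+1) : ℕ) : ℚ_[p])‖ * ‖(((i+1 : ℕ)) : ℚ_[p])‖ := by
    rw [← norm_mul, ← norm_mul]
    congr 1
    have hnat : M * m.choose i = M.choose (i+1) * (i+1) := Nat.add_one_mul_choose_eq m i
    exact_mod_cast hnat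
  have hlb : ((p : ℝ) * ((i:ℝ)+1))⁻¹ ≤ ‖(((i+1 : ℕ)) : ℚ_[p])‖ := by
    have := padic_norm_natCast_lb (p := p) (i+1) (Nat.succ_ne_zero i)
    push_cast at this ⊢
    exact this
  have h1 : ‖((M.choose (i+1) : ℕ) : ℚ_[p])‖ * ‖(((i+1 : ℕ)) : ℚ_[p])‖
      ≤ ‖((M : ℕ) : ℚ_[p])‖ := by
    rw [← key]
    exact mul_le_of_le_one_right (norm_nonneg _) (hnat1 _)
  have hpos : (0:ℝ) < (p : ℝ) * ((i:ℝ)+1) := by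
    have : (0:ℝ) < p := by exact_mod_cast hp.out.pos
    positivity
  have hchoose_le : ‖((M.choose (i+1) : ℕ) : ℚ_[p])‖
      ≤ ‖((M : ℕ) : ℚ_[p])‖ * ((p : ℝ) * ((i:ℝ)+1)) := by
    calc ‖((M.choose (i+1) : ℕ) : ℚ_[p])‖
        = (‖((M.choose (i+1) : ℕ) : ℚ_[p])‖ * ((p : ℝ) * ((i:ℝ)+1))⁻¹)
            * ((p : ℝ) * ((i:ℝ)+1)) := (inv_mul_cancel_right₀ hpos.ne' _).symm
      _ ≤ (‖((M.choose (i+1) : ℕ) : ℚ_[p])‖ * ‖(((i+1 : ℕ)) : ℚ_[p])‖)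
            * ((p : ℝ) * ((i:ℝ)+1)) := by gcongr
      _ ≤ ‖((M : ℕ) : ℚ_[p])‖ * ((p : ℝ) * ((i:ℝ)+1)) :=
            mul_le_mul_of_nonneg_right h1 hpos.le
  have hgeo : (p : ℝ) * ((i:ℝ)+1) * ‖x‖ ^ (i+1) ≤ C := by
    have hBi : ((i+1 : ℕ) : ℝ) ^ 1 * ‖x‖ ^ (i+1) ≤ B := hB ⟨i+1, rfl⟩
    push_cast at hBi
    have hp0 : (0:ℝ) ≤ p := by positivity
    calc (p : ℝ) * ((i:ℝ)+1) * ‖x‖ ^ (i+1)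
        = (p : ℝ) * (((i:ℝ)+1) ^ 1 * ‖x‖ ^ (i+1)) := by ring
      _ ≤ (p : ℝ) * B := by
          refine mul_le_mul_of_nonneg_left ?_ hp0
          exact hBi
      _ ≤ C := le_max_left _ _
  calc ‖x‖ ^ (i+1) * ‖((M.choose (i+1) : ℕ) : ℚ_[p])‖
      ≤ ‖x‖ ^ (i+1) * (‖((M : ℕ) : ℚ_[p])‖ * ((p : ℝ) * ((i:ℝ)+1))) := by
        refine mul_le_mul_of_nonneg_left hchoose_le (by positivity)
    _ = ((p : ℝ) * ((i:ℝ)+1) * ‖x‖ ^ (i+1)) * ‖((M : ℕ) : ℚ_[p])‖ := by ring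
    _ ≤ C * ‖((M : ℕ) : ℚ_[p])‖ :=
        mul_le_mul_of_nonneg_right hgeo (norm_nonneg _)

end padicLemmas

lemma pow_factorial_tendsto_one (p : ℕ) [hp : Fact p.Prime]
    (K : Type*) [NormedField K] [CompleteSpace K]
    [Algebra ℚ_[p] K] (hext : ∀ y : ℚ_[p], ‖algebraMap ℚ_[p] K y‖ = ‖y‖)
    [FiniteDimensional ℚ_[p] K] {α : K} (hα : ‖α‖ = 1) :
    Tendsto (fun m : ℕ => α ^ (Nat.factorial m)) atTop (nhds 1) := by
  letI : NormedSpace ℚ_[p] K :=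
    ⟨fun q y => by rw [Algebra.smul_def, norm_mul, hext]⟩
  haveI : ProperSpace K := FiniteDimensional.proper ℚ_[p] K
  have hmem : ∀ n : ℕ, α ^ n ∈ Metric.closedBall (0 : K) 1 := fun n => by
    simp [Metric.mem_closedBall, dist_zero_right, norm_pow, hα]
  obtain ⟨L, -, φ, hφ, hconv⟩ := (isCompact_closedBall (0 : K) 1).tendsto_subseq hmem
  obtain ⟨N₀, hN₀⟩ := Metric.cauchySeq_iff'.1 hconv.cauchySeq 1 one_pos
  have h1 : dist (α ^ φ (N₀+1)) (α ^ φ N₀) < 1 := hN₀ (N₀+1) (Nat.le_succ _)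
  set N : ℕ := φ (N₀+1) - φ N₀ with hNdef
  have hNpos : 0 < N := Nat.sub_pos_of_lt (hφ (Nat.lt_succ_self N₀))
  have hmono := hφ.monotone (Nat.le_succ N₀)
  have hsplit : φ (N₀+1) = φ N₀ + N := by omega
  have hxlt : ‖α ^ N - 1‖ < 1 := by
    have heq : α ^ φ (N₀+1) - α ^ φ N₀ = α ^ φ N₀ * (α ^ N - 1) := by
      rw [hsplit, pow_add]; ring
    have hd : dist (α ^ φ (N₀+1)) (α ^ φ N₀) = ‖α ^ φ N₀‖ * ‖α ^ N - 1‖ := by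
      rw [dist_eq_norm, heq, norm_mul]
    rwa [hd, norm_pow, hα, one_pow, one_mul] at h1
  obtain ⟨C, hC0, hC⟩ := binom_bound (p := p) hext hxlt
  have hpow : ∀ M : ℕ, ‖α ^ (N * M) - 1‖ ≤ C * ‖(M : ℚ_[p])‖ := fun M => by
    have h := hC M
    have : (1 : K) + (α ^ N - 1) = α ^ N := by ring
    rwa [this, ← pow_mul] at h
  have hdvd : ∀ m : ℕ, N ≤ m → N * (m.factorial / N) = m.factorial := fun m hm =>
    Nat.mul_div_cancel' (Nat.dvd_factorial hNpos hm)
  have hq0 : Tendsto (fun m : ℕ => ((m.factorial / N : ℕ) : ℚ_[p])) atTop (nhds 0) := by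
    rw [NormedAddCommGroup.tendsto_nhds_zero]
    intro ε hε
    have hp1 : (1:ℝ) < p := by exact_mod_cast hp.out.one_lt
    have hinv : (p:ℝ)⁻¹ < 1 := inv_lt_one_of_one_lt₀ hp1
    obtain ⟨k, hk⟩ := exists_pow_lt_of_lt_one hε hinv
    filter_upwards [eventually_ge_atTop (N * p ^ k)] with m hm
    have hppos : 0 < N * p ^ k := Nat.mul_pos hNpos (pow_pos hp.out.pos k)
    obtain ⟨q, hq⟩ := Nat.dvd_factorial hppos hm
    have hdiv : m.factorial / N = p ^ k * q := by
      rw [hq, mul_assoc, Nat.mul_div_cancel_left _ hNpos]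
    calc ‖((m.factorial / N : ℕ) : ℚ_[p])‖
        ≤ (p:ℝ) ^ (-(k:ℤ)) := padic_norm_natCast_le_of_dvd ⟨q, hdiv⟩
      _ = ((p:ℝ)⁻¹) ^ k := by rw [zpow_neg, zpow_natCast, inv_pow]
      _ < ε := hk
  have hg0 : Tendsto (fun m : ℕ => C * ‖((m.factorial / N : ℕ) : ℚ_[p])‖) atTop (nhds 0) := by
    have h := (hq0.norm).const_mul C
    simpa using h
  have hbound : ∀ᶠ m : ℕ in atTop,
      ‖α ^ m.factorial - 1‖ ≤ C * ‖((m.factorial / N : ℕ) : ℚ_[p])‖ := by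
    filter_upwards [eventually_ge_atTop N] with m hm
    have h := hpow (m.factorial / N)
    rwa [hdvd m hm] at h
  have h0 : Tendsto (fun m : ℕ => α ^ m.factorial - 1) atTop (nhds 0) :=
    squeeze_zero_norm' hbound hg0
  have h1' := h0.add_const 1
  simpa using h1'

/-- Let `K` be a finite extension of `ℚ_p` with its `p`-adic absolute value, and let
`α ≠ β` be the two roots of `X² − aX + c`.  The matrix `U = [[a, 1], [−c, 0]]` has
eigenvalues `α` and `β` with respective eigenvectors `(1, −β)` and `(1, −α)`, and if
`|α|_p = 1 > |β|_p`, then `U^{m!}` converges entrywise as `m → ∞` to the projection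
onto the `α`-eigenline along the `β`-eigenline, scaled by `t = lim α^{m!}`. -/
theorem matrix_factorial_power_limit (p : ℕ) [Fact p.Prime]
    (K : Type*) [NormedField K] [CompleteSpace K]
    [Algebra ℚ_[p] K] (hext : ∀ y : ℚ_[p], ‖algebraMap ℚ_[p] K y‖ = ‖y‖)
    [FiniteDimensional ℚ_[p] K]
    (a c α β : K) (hsum : α + β = a) (hprod : α * β = c) (hne : α ≠ β)
    (hα : ‖α‖ = 1) (hβ : ‖β‖ < 1) :
    let U : Matrix (Fin 2) (Fin 2) K := !![a, 1; -c, 0]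
    U.mulVec ![1, -β] = α • ![1, -β] ∧
    U.mulVec ![1, -α] = β • ![1, -α] ∧
    Module.End.HasEigenvalue (Matrix.toLin' U) α ∧
    Module.End.HasEigenvalue (Matrix.toLin' U) β ∧
    ∃ t : K, Tendsto (fun m : ℕ => α ^ (Nat.factorial m)) atTop (nhds t) ∧
      Tendsto (fun m : ℕ => U ^ (Nat.factorial m)) atTop
        (nhds (t • ((α - β)⁻¹ • !![α, 1; -c, -β]))) := by
  subst hsum hprod
  intro U
  have hU : U = !![α + β, 1; -(α * β), 0] := rfl
  have hαβ : α - β ≠ 0 := sub_ne_zero.2 hne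
  have hv1 : U.mulVec ![1, -β] = α • ![1, -β] := by
    rw [hU]
    funext i
    fin_cases i <;>
      simp [Matrix.mulVec, dotProduct, Fin.sum_univ_two] <;> ring
  have hv2 : U.mulVec ![1, -α] = β • ![1, -α] := by
    rw [hU]
    funext i
    fin_cases i <;>
      simp [Matrix.mulVec, dotProduct, Fin.sum_univ_two] <;> ring
  have hvne1 : (![1, -β] : Fin 2 → K) ≠ 0 := by
    intro h; simpa using congrFun h 0
  have hvne2 : (![1, -α] : Fin 2 → K) ≠ 0 := by
    intro h; simpa using congrFun h 0
  have he1 : Module.End.HasEigenvalue (Matrix.toLin' U) α :=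
    Module.End.hasEigenvalue_of_hasEigenvector
      ⟨Module.End.mem_eigenspace_iff.2 (by rw [Matrix.toLin'_apply]; exact hv1), hvne1⟩
  have he2 : Module.End.HasEigenvalue (Matrix.toLin' U) β :=
    Module.End.hasEigenvalue_of_hasEigenvector
      ⟨Module.End.mem_eigenspace_iff.2 (by rw [Matrix.toLin'_apply]; exact hv2), hvne2⟩
  set A : ℕ → Matrix (Fin 2) (Fin 2) K := fun n =>
    !![α ^ (n+1) - β ^ (n+1), α ^ n - β ^ n;
       -(α * β) * (α ^ n - β ^ n), α * β ^ n - β * α ^ n] with hA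
  have hUn : ∀ n : ℕ, U ^ n = (α - β)⁻¹ • A n := by
    intro n
    induction n with
    | zero =>
      ext i j
      fin_cases i <;> fin_cases j <;>
        simp [hA, Matrix.one_apply] <;> field_simp
    | succ n ih =>
      rw [pow_succ, ih, hU, Matrix.smul_mul]
      congr 1
      ext i j
      fin_cases i <;> fin_cases j <;>
        · simp [hA, Matrix.mul_apply, Fin.sum_univ_two]
          try ring
  have htend1 : Tendsto (fun m : ℕ => α ^ (Nat.factorial m)) atTop (nhds 1) :=
    pow_factorial_tendsto_one p K hext hα
  refine ⟨hv1, hv2, he1, he2, 1, htend1, ?_⟩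
  rw [one_smul]
  simp only [hUn]
  refine Filter.Tendsto.const_smul ?_ ((α - β)⁻¹)
  have hfact : Tendsto Nat.factorial atTop atTop :=
    tendsto_atTop_mono (fun n => Nat.self_le_factorial n) tendsto_id
  have hβ0 : Tendsto (fun m : ℕ => β ^ (Nat.factorial m)) atTop (nhds 0) :=
    (tendsto_pow_atTop_nhds_zero_of_norm_lt_one hβ).comp hfact
  refine tendsto_pi_nhds.2 fun i => tendsto_pi_nhds.2 fun j => ?_
  fin_cases i <;> fin_cases j
  · have h := (htend1.mul_const α).sub (hβ0.mul_const β)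
    simpa [hA, pow_succ] using h
  · have h := htend1.sub hβ0
    simpa [hA] using h
  · have h := (htend1.sub hβ0).const_mul (-(α * β))
    simpa [hA] using h
  · have h := (hβ0.const_mul α).sub (htend1.const_mul β)
    simpa [hA] using h
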